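/- For a weak composition α of length n and σ ∈ S_n, 𝒜_α^σ(x) = Σ x_1^{|α|−|β_{(1)}|} x_2^{|β_{(2)}|−|β_{(1)}|} ⋯ x_n^{|β_{(n)}|−|β_{(n−1)}|}, where the sum ranges over saturated chains β_{(n)} ⋖_σ ⋯ ⋖_σ β_{(1)} ⋖_σ α in the poset ≤_σ (so β_{(i)} has length n−i, and β_{(n)} is the empty composition). -/

import Mathlib

/-- A semi-skyline augmented filling of shape `α` with basement `σ`.
Entries are positive naturals; `σ i` as a value in `[n]` is `(σ i : ℕ) + 1`.
Conditions: positivity, basement, no descents, type A and type B inversion triples. -/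
def IsSSAF (n : ℕ) (α : Fin n → ℕ) (σ : Equiv.Perm (Fin n)) (F : Fin n → ℕ → ℕ) : Prop :=
  (∀ i j, j ≤ α i → 1 ≤ F i j) ∧
  (∀ i, F i 0 = (σ i : ℕ) + 1) ∧
  (∀ i j, j + 1 ≤ α i → F i (j + 1) ≤ F i j) ∧
  (∀ ℓ r : Fin n, ∀ i : ℕ, ℓ < r → α r ≤ α ℓ → i + 1 ≤ α r →
    ¬ (F ℓ (i + 1) ≤ F r (i + 1) ∧ F r (i + 1) ≤ F ℓ i)) ∧
  (∀ ℓ r : Fin n, ∀ i : ℕ, ℓ < r → α ℓ < α r → i ≤ α ℓ → i + 1 ≤ α r →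
    ¬ (F r (i + 1) ≤ F ℓ i ∧ F ℓ i ≤ F r i))

/-- `β` is `σ`-extendable to `α` (Definition 3.3). -/
def SigmaExtendable (n : ℕ) (σ : Equiv.Perm (Fin n)) (β α : Fin n → ℕ) : Prop :=
  (∀ i, β i ≤ α i) ∧
  ∀ ℓ r : Fin n, ℓ < r →
    (α r ≤ α ℓ → β r ≤ β ℓ → α r ≤ β ℓ) ∧
    (α ℓ < α r → β ℓ < β r → α ℓ < β r) ∧
    (α r ≤ α ℓ → β ℓ < β r → α r = β r ∧ (σ ℓ : ℕ) < (σ r : ℕ)) ∧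
    (α ℓ < α r → β r ≤ β ℓ → α ℓ = β ℓ ∧ (σ r : ℕ) < (σ ℓ : ℕ))

/-- The set of SSAFs of shape `α` with basement `σ`, with fillings normalized
to be `0` outside the cells of the diagram. -/
def SSAFSet (n : ℕ) (α : Fin n → ℕ) (σ : Equiv.Perm (Fin n)) : Set (Fin n → ℕ → ℕ) :=
  {F | IsSSAF n α σ F ∧ ∀ i j, α i < j → F i j = 0}

/-- The permuted-basement Demazure atom `𝒜_α^σ`, as a sum of monomial weights
over SSAFs of shape `α` with basement `σ`; `x j` is the variable `x_j`. -/
noncomputable def atomSum (n : ℕ) (α : Fin n → ℕ) (σ : Equiv.Perm (Fin n)) (x : ℕ → ℝ) : ℝ :=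
  ∑ᶠ F ∈ SSAFSet n α σ, ∏ i : Fin n, ∏ j ∈ Finset.Icc 1 (α i), x (F i j)

/-- Delete the value `1` from a permutation (here the `Fin` value `0`) and
shift the remaining values down, reindexing the positions accordingly. -/
noncomputable def delPerm {m : ℕ} (τ : Equiv.Perm (Fin (m + 1))) : Equiv.Perm (Fin m) :=
  Equiv.ofBijective
    (fun i => (τ ((τ⁻¹ 0).succAbove i)).pred (fun h => by
      have : (τ⁻¹ 0).succAbove i = τ⁻¹ 0 := by
        have := congrArg τ.symm h
        simpa using this
      exact (τ⁻¹ 0).succAbove_ne i this))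
    (Finite.injective_iff_bijective.mp (fun i j hij => by
      have h2 : τ ((τ⁻¹ 0).succAbove i) = τ ((τ⁻¹ 0).succAbove j) := by
        have := congrArg Fin.succ hij
        simpa [Fin.succ_pred] using this
      exact Fin.succAbove_right_injective (τ.injective h2)))

/-- `delPerm`, extended to permutations of `Fin m` for all `m`. -/
noncomputable def delPerm' : {m : ℕ} → Equiv.Perm (Fin m) → Equiv.Perm (Fin (m - 1))
  | 0, τ => τ
  | _ + 1, τ => delPerm τ

/-- The permutation `σ_k` of Definition 3.8: obtained from `σ` by `k` times
deleting the value `1` and decrementing the remaining values. -/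
noncomputable def sigmaAt {n : ℕ} (σ : Equiv.Perm (Fin n)) : (k : ℕ) → Equiv.Perm (Fin (n - k))
  | 0 => σ
  | k + 1 => delPerm' (sigmaAt σ k)

/-- The covering relation at matching lengths: `b ⋖ a` iff inserting a zero part
into `b` at position `τ⁻¹(1)` gives a composition `τ`-extendable to `a`. -/
def CovStep {m : ℕ} (τ : Equiv.Perm (Fin (m + 1))) (b : Fin m → ℕ)
    (a : Fin (m + 1) → ℕ) : Prop :=
  SigmaExtendable (m + 1) τ ((τ⁻¹ 0).insertNth 0 b) a

/-- Saturated chains `β_(n) ⋖_σ ⋯ ⋖_σ β_(1) ⋖_σ α` in the poset `≤_σ`,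
encoded as functions giving the composition of each length `ℓ ≤ n`
(and junk value `0` above `n`). -/
def ChainSet (n : ℕ) (σ : Equiv.Perm (Fin n)) (α : Fin n → ℕ) :
    Set ((ℓ : ℕ) → Fin ℓ → ℕ) :=
  {c | (∀ i : Fin n, c n i = α i) ∧ (∀ ℓ, n < ℓ → ∀ i, c ℓ i = 0) ∧
    ∀ ℓ, (hℓ : ℓ + 1 ≤ n) →
      CovStep ((finCongr (Nat.sub_sub_self hℓ)).permCongr (sigmaAt σ (n - (ℓ + 1))))
        (c ℓ) (c (ℓ + 1))}


-- generic helpers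
lemma permCongr_self {a : ℕ} (h : a = a) (τ : Equiv.Perm (Fin a)) :
    (finCongr h).permCongr τ = τ := by
  rw [Subsingleton.elim h rfl, finCongr_refl]
  ext i; simp

lemma permCongr_permCongr {a b c : ℕ} (h : a = b) (h' : b = c) (τ : Equiv.Perm (Fin a)) :
    (finCongr h').permCongr ((finCongr h).permCongr τ) = (finCongr (h.trans h')).permCongr τ := by
  subst h; subst h'; simp [permCongr_self]; rfl

lemma permCongr_irrel {a b : ℕ} (h h' : a = b) (τ : Equiv.Perm (Fin a)) :
    (finCongr h).permCongr τ = (finCongr h').permCongr τ := by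
  rw [Subsingleton.elim h h']

-- monotone row lemma
lemma dec_trans {n : ℕ} (α : Fin n → ℕ) (F : Fin n → ℕ → ℕ)
    (hdec : ∀ i j, j + 1 ≤ α i → F i (j + 1) ≤ F i j) :
    ∀ i j k, j ≤ k → k ≤ α i → F i k ≤ F i j := by
  intro i j k hjk hk
  induction k with
  | zero => have : j = 0 := by omega
            subst this; exact le_rfl
  | succ k ih =>
    rcases Nat.eq_or_lt_of_le hjk with rfl | hlt
    · exact le_rfl
    · exact le_trans (hdec i k hk) (ih (by omega) (by omega))

lemma card_filter_downset {N : ℕ} (f : ℕ → ℕ)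
    (hmono : ∀ j k, k ≤ j → j ≤ N → f j ≤ f k) :
    ((Finset.Icc 1 N).filter (fun j => 2 ≤ f j)).card ≤ N ∧
      ∀ j, 1 ≤ j → j ≤ N →
        (2 ≤ f j ↔ j ≤ ((Finset.Icc 1 N).filter (fun j => 2 ≤ f j)).card) := by
  set T := (Finset.Icc 1 N).filter (fun j => 2 ≤ f j) with hT
  have hcard : T.card ≤ N := by
    calc T.card ≤ (Finset.Icc 1 N).card := Finset.card_filter_le _ _
    _ = N := by rw [Nat.card_Icc]; omega
  refine ⟨hcard, fun j h1 hN => ⟨fun h2 => ?_, fun hle => ?_⟩⟩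
  · have hsub : Finset.Icc 1 j ⊆ T := by
      intro k hk
      simp only [Finset.mem_Icc] at hk
      simp only [hT, Finset.mem_filter, Finset.mem_Icc]
      exact ⟨⟨hk.1, le_trans hk.2 hN⟩, le_trans h2 (hmono j k hk.2 hN)⟩
    have := Finset.card_le_card hsub
    rw [Nat.card_Icc] at this; omega
  · by_contra hf
    have hsub : T ⊆ Finset.Icc 1 (j - 1) := by
      intro k hk
      simp only [hT, Finset.mem_filter, Finset.mem_Icc] at hk
      simp only [Finset.mem_Icc]
      refine ⟨hk.1.1, ?_⟩
      by_contra hkj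
      have : f k ≤ f j := hmono k j (by omega) hk.1.2
      omega
    have := Finset.card_le_card hsub
    rw [Nat.card_Icc] at this; omega

lemma finite_bounded_fillings {n A B : ℕ} (S : Set (Fin n → ℕ → ℕ))
    (h : ∀ F ∈ S, ∀ i j, F i j ≤ B ∧ (A < j → F i j = 0)) : S.Finite := by
  apply Set.Finite.subset (Set.finite_range
    (fun g : Fin n → Fin (A + 1) → Fin (B + 1) =>
      fun i j => if hj : j < A + 1 then (g i ⟨j, hj⟩ : ℕ) else 0))
  intro F hF
  refine ⟨fun i j => ⟨F i j, by have := (h F hF i j).1; omega⟩, ?_⟩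
  funext i j
  by_cases hj : j < A + 1
  · simp [hj]
  · simp only [hj, dif_neg, not_false_iff]
    exact ((h F hF i j).2 (by omega)).symm

lemma finite_bounded_comps {n A : ℕ} (S : Set (Fin n → ℕ))
    (h : ∀ b ∈ S, ∀ i, b i ≤ A) : S.Finite := by
  apply Set.Finite.subset (Set.finite_range
    (fun g : Fin n → Fin (A + 1) => fun i => (g i : ℕ)))
  intro b hb
  exact ⟨fun i => ⟨b i, by have := h b hb i; omega⟩, rfl⟩

lemma finite_bounded_chains {n A : ℕ} (S : Set ((ℓ : ℕ) → Fin ℓ → ℕ))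
    (h : ∀ c ∈ S, (∀ ℓ (i : Fin ℓ), c ℓ i ≤ A) ∧ (∀ ℓ, n < ℓ → ∀ i, c ℓ i = 0)) : S.Finite := by
  apply Set.Finite.subset (Set.finite_range
    (fun g : (∀ ℓ : Fin (n + 1), Fin ℓ → Fin (A + 1)) =>
      fun ℓ (i : Fin ℓ) => if hℓ : ℓ < n + 1 then (g ⟨ℓ, hℓ⟩ i : ℕ) else 0))
  intro c hc
  refine ⟨fun ℓ i => ⟨c ℓ i, by have := (h c hc).1 ℓ i; omega⟩, ?_⟩
  funext ℓ i
  by_cases hℓ : ℓ < n + 1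
  · simp [hℓ]
  · simp only [hℓ, dif_neg, not_false_iff]
    exact ((h c hc).2 ℓ (by omega) i).symm

section OneStep

variable {m : ℕ}

/-- Insert a zero part into a composition. -/
def insSh (p : Fin (m + 1)) (b : Fin m → ℕ) : Fin (m + 1) → ℕ := p.insertNth 0 b

/-- Insert a zero row into a filling. -/
def insF (p : Fin (m + 1)) (G : Fin m → ℕ → ℕ) : Fin (m + 1) → ℕ → ℕ :=
  p.insertNth (fun _ => 0) G

@[simp] lemma insSh_same (p : Fin (m + 1)) (b : Fin m → ℕ) : insSh p b p = 0 :=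
  Fin.insertNth_apply_same (α := fun _ => ℕ) p 0 b

@[simp] lemma insSh_succAbove (p : Fin (m + 1)) (b : Fin m → ℕ) (i : Fin m) :
    insSh p b (p.succAbove i) = b i :=
  Fin.insertNth_apply_succAbove (α := fun _ => ℕ) p 0 b i

@[simp] lemma insF_same (p : Fin (m + 1)) (G : Fin m → ℕ → ℕ) : insF p G p = fun _ => 0 :=
  Fin.insertNth_apply_same (α := fun _ => ℕ → ℕ) p _ G

@[simp] lemma insF_succAbove (p : Fin (m + 1)) (G : Fin m → ℕ → ℕ) (i : Fin m) :
    insF p G (p.succAbove i) = G i :=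
  Fin.insertNth_apply_succAbove (α := fun _ => ℕ → ℕ) p _ G i

@[simp] lemma insF_same_apply (p : Fin (m + 1)) (G : Fin m → ℕ → ℕ) (j : ℕ) :
    insF p G p j = 0 := by rw [insF_same]

lemma covStep_iff (σ : Equiv.Perm (Fin (m + 1))) (b : Fin m → ℕ) (a : Fin (m + 1) → ℕ) :
    CovStep σ b a ↔ SigmaExtendable (m + 1) σ (insSh (σ⁻¹ 0) b) a := Iff.rfl

/-- Shape of the filling obtained by deleting all entries `≤ 1`. -/
def shp (σ : Equiv.Perm (Fin (m + 1))) (α : Fin (m + 1) → ℕ) (F : Fin (m + 1) → ℕ → ℕ) :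
    Fin m → ℕ :=
  fun i => ((Finset.Icc 1 (α ((σ⁻¹ 0).succAbove i))).filter
    (fun j => 2 ≤ F ((σ⁻¹ 0).succAbove i) j)).card

def Phi (σ : Equiv.Perm (Fin (m + 1))) (F : Fin (m + 1) → ℕ → ℕ) : Fin m → ℕ → ℕ :=
  fun i j => F ((σ⁻¹ 0).succAbove i) j - 1

def Psi (σ : Equiv.Perm (Fin (m + 1))) (α : Fin (m + 1) → ℕ) (G : Fin m → ℕ → ℕ) :
    Fin (m + 1) → ℕ → ℕ :=
  fun i j => if j ≤ α i then insF (σ⁻¹ 0) G i j + 1 else 0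

lemma sigma_inv_zero (σ : Equiv.Perm (Fin (m + 1))) : σ (σ⁻¹ 0) = 0 :=
  Equiv.apply_symm_apply σ 0

lemma sigma_succAbove_pos (σ : Equiv.Perm (Fin (m + 1))) (i : Fin m) :
    1 ≤ (σ ((σ⁻¹ 0).succAbove i) : ℕ) := by
  have hne : σ ((σ⁻¹ 0).succAbove i) ≠ 0 := by
    intro h
    have := congrArg σ.symm h
    simp only [Equiv.symm_apply_apply] at this
    exact Fin.succAbove_ne (σ⁻¹ 0) i (by simpa using this)
  have := Fin.pos_iff_ne_zero.mpr hne
  omega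

lemma delPerm_val (σ : Equiv.Perm (Fin (m + 1))) (i : Fin m) :
    (delPerm σ i : ℕ) = (σ ((σ⁻¹ 0).succAbove i) : ℕ) - 1 := by
  simp [delPerm, Equiv.ofBijective_apply, Fin.coe_pred]

/-- Characterization of the truncated shape. -/
lemma ssaf_char (σ : Equiv.Perm (Fin (m + 1))) (α : Fin (m + 1) → ℕ)
    (F : Fin (m + 1) → ℕ → ℕ) (hF : F ∈ SSAFSet (m + 1) α σ) :
    (∀ r, insSh (σ⁻¹ 0) (shp σ α F) r ≤ α r) ∧
      (∀ r j, 1 ≤ j → j ≤ α r →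
        (2 ≤ F r j ↔ j ≤ insSh (σ⁻¹ 0) (shp σ α F) r)) := by
  obtain ⟨⟨hpos, hbase, hdec, htA, htB⟩, hnorm⟩ := hF
  have hmono := dec_trans α F hdec
  constructor
  · intro r
    rcases eq_or_ne r (σ⁻¹ 0) with rfl | hr
    · rw [insSh_same]; exact Nat.zero_le _
    · obtain ⟨i, rfl⟩ := Fin.exists_succAbove_eq hr
      rw [insSh_succAbove]
      exact (card_filter_downset _ (fun j k hkj hj => hmono _ k j hkj hj)).1
  · intro r j h1 hj
    rcases eq_or_ne r (σ⁻¹ 0) with rfl | hr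
    · rw [insSh_same]
      have h0 : F (σ⁻¹ 0) j ≤ F (σ⁻¹ 0) 0 := hmono _ 0 j (Nat.zero_le _) hj
      rw [hbase, sigma_inv_zero] at h0
      simp only [Fin.val_zero] at h0
      constructor
      · intro h2; omega
      · intro h; omega
    · obtain ⟨i, rfl⟩ := Fin.exists_succAbove_eq hr
      rw [insSh_succAbove]
      exact (card_filter_downset _ (fun a k hka ha => hmono _ k a hka ha)).2 j h1 hj

lemma entry_one (σ : Equiv.Perm (Fin (m + 1))) (α : Fin (m + 1) → ℕ)
    (F : Fin (m + 1) → ℕ → ℕ) (hF : F ∈ SSAFSet (m + 1) α σ) (r : Fin (m + 1)) (j : ℕ)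
    (h1 : 1 ≤ j) (hj : j ≤ α r) (hB : insSh (σ⁻¹ 0) (shp σ α F) r < j) : F r j = 1 := by
  have hc := (ssaf_char σ α F hF).2 r j h1 hj
  have hp := hF.1.1 r j hj
  omega

lemma entry_ge2 (σ : Equiv.Perm (Fin (m + 1))) (α : Fin (m + 1) → ℕ)
    (F : Fin (m + 1) → ℕ → ℕ) (hF : F ∈ SSAFSet (m + 1) α σ) (r : Fin (m + 1)) (j : ℕ)
    (h1 : 1 ≤ j) (hB : j ≤ insSh (σ⁻¹ 0) (shp σ α F) r) : 2 ≤ F r j := by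
  have hj : j ≤ α r := le_trans hB ((ssaf_char σ α F hF).1 r)
  exact ((ssaf_char σ α F hF).2 r j h1 hj).2 hB

lemma chain_C (σ : Equiv.Perm (Fin (m + 1))) (α : Fin (m + 1) → ℕ)
    (F : Fin (m + 1) → ℕ → ℕ) (hF : F ∈ SSAFSet (m + 1) α σ) {ℓ r : Fin (m + 1)}
    (hlr : ℓ < r) (hα : α r ≤ α ℓ)
    (hB : insSh (σ⁻¹ 0) (shp σ α F) ℓ < insSh (σ⁻¹ 0) (shp σ α F) r)
    (hBr : insSh (σ⁻¹ 0) (shp σ α F) r = α r) :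
    ∀ j, j ≤ insSh (σ⁻¹ 0) (shp σ α F) ℓ → F ℓ j < F r (j + 1) := by
  have hF2 := hF
  obtain ⟨⟨hpos, hbase, hdec, htA, htB⟩, hnorm⟩ := hF2
  suffices H : ∀ d, d ≤ insSh (σ⁻¹ 0) (shp σ α F) ℓ →
      F ℓ (insSh (σ⁻¹ 0) (shp σ α F) ℓ - d) < F r (insSh (σ⁻¹ 0) (shp σ α F) ℓ - d + 1) by
    intro j hj
    have := H (insSh (σ⁻¹ 0) (shp σ α F) ℓ - j) (by omega)
    rwa [show insSh (σ⁻¹ 0) (shp σ α F) ℓ - (insSh (σ⁻¹ 0) (shp σ α F) ℓ - j) = j by omega]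
      at this
  intro d hd
  induction d with
  | zero =>
    simp only [Nat.sub_zero]
    have h1 : F ℓ (insSh (σ⁻¹ 0) (shp σ α F) ℓ + 1) = 1 :=
      entry_one σ α F hF ℓ _ (by omega) (by omega) (by omega)
    have h2 : 1 ≤ F r (insSh (σ⁻¹ 0) (shp σ α F) ℓ + 1) := hpos r _ (by omega)
    have h3 := htA ℓ r (insSh (σ⁻¹ 0) (shp σ α F) ℓ) hlr hα (by omega)
    omega
  | succ d ih =>
    have ihd := ih (by omega)
    have hj1 : insSh (σ⁻¹ 0) (shp σ α F) ℓ - d = (insSh (σ⁻¹ 0) (shp σ α F) ℓ - (d + 1)) + 1 := by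
      omega
    rw [hj1] at ihd
    have hdec2 : F r (insSh (σ⁻¹ 0) (shp σ α F) ℓ - (d + 1) + 1 + 1) ≤
        F r (insSh (σ⁻¹ 0) (shp σ α F) ℓ - (d + 1) + 1) := hdec r _ (by omega)
    have h3 := htA ℓ r (insSh (σ⁻¹ 0) (shp σ α F) ℓ - (d + 1)) hlr hα (by omega)
    omega

lemma chain_E (σ : Equiv.Perm (Fin (m + 1))) (α : Fin (m + 1) → ℕ)
    (F : Fin (m + 1) → ℕ → ℕ) (hF : F ∈ SSAFSet (m + 1) α σ) {ℓ r : Fin (m + 1)}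
    (hlr : ℓ < r) (hα : α ℓ < α r)
    (hB : insSh (σ⁻¹ 0) (shp σ α F) r ≤ insSh (σ⁻¹ 0) (shp σ α F) ℓ)
    (hBl : insSh (σ⁻¹ 0) (shp σ α F) ℓ = α ℓ) :
    ∀ j, j ≤ insSh (σ⁻¹ 0) (shp σ α F) r → F r j < F ℓ j := by
  have hF2 := hF
  obtain ⟨⟨hpos, hbase, hdec, htA, htB⟩, hnorm⟩ := hF2
  suffices H : ∀ d, d ≤ insSh (σ⁻¹ 0) (shp σ α F) r →
      F r (insSh (σ⁻¹ 0) (shp σ α F) r - d) < F ℓ (insSh (σ⁻¹ 0) (shp σ α F) r - d) by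
    intro j hj
    have := H (insSh (σ⁻¹ 0) (shp σ α F) r - j) (by omega)
    rwa [show insSh (σ⁻¹ 0) (shp σ α F) r - (insSh (σ⁻¹ 0) (shp σ α F) r - j) = j by omega]
      at this
  intro d hd
  induction d with
  | zero =>
    simp only [Nat.sub_zero]
    have h1 : F r (insSh (σ⁻¹ 0) (shp σ α F) r + 1) = 1 :=
      entry_one σ α F hF r _ (by omega) (by omega) (by omega)
    have h2 : 1 ≤ F ℓ (insSh (σ⁻¹ 0) (shp σ α F) r) := hpos ℓ _ (by omega)
    have h3 := htB ℓ r (insSh (σ⁻¹ 0) (shp σ α F) r) hlr hα (by omega) (by omega)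
    omega
  | succ d ih =>
    have ihd := ih (by omega)
    have hj1 : insSh (σ⁻¹ 0) (shp σ α F) r - d = (insSh (σ⁻¹ 0) (shp σ α F) r - (d + 1)) + 1 := by
      omega
    rw [hj1] at ihd
    have hdec2 : F ℓ (insSh (σ⁻¹ 0) (shp σ α F) r - (d + 1) + 1) ≤
        F ℓ (insSh (σ⁻¹ 0) (shp σ α F) r - (d + 1)) := hdec ℓ _ (by omega)
    have h3 := htB ℓ r (insSh (σ⁻¹ 0) (shp σ α F) r - (d + 1)) hlr hα (by omega) (by omega)
    omega

lemma forward_ext (σ : Equiv.Perm (Fin (m + 1))) (α : Fin (m + 1) → ℕ)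
    (F : Fin (m + 1) → ℕ → ℕ) (hF : F ∈ SSAFSet (m + 1) α σ) :
    CovStep σ (shp σ α F) α := by
  rw [covStep_iff]
  have hchar := ssaf_char σ α F hF
  have hF2 := hF
  obtain ⟨⟨hpos, hbase, hdec, htA, htB⟩, hnorm⟩ := hF2
  refine ⟨hchar.1, fun ℓ r hlr => ⟨?_, ?_, ?_, ?_⟩⟩
  · -- (1)
    intro hα hBrl
    by_contra h
    push_neg at h
    have hc1 := hchar.1 ℓ
    apply htA ℓ r (insSh (σ⁻¹ 0) (shp σ α F) ℓ) hlr hα (by omega)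
    have h1 : F ℓ (insSh (σ⁻¹ 0) (shp σ α F) ℓ + 1) = 1 :=
      entry_one σ α F hF ℓ _ (by omega) (by omega) (by omega)
    have h2 : 1 ≤ F r (insSh (σ⁻¹ 0) (shp σ α F) ℓ + 1) := hpos r _ (by omega)
    have h3 : F r (insSh (σ⁻¹ 0) (shp σ α F) ℓ + 1) = 1 :=
      entry_one σ α F hF r _ (by omega) (by omega) (by omega)
    have h4 : 1 ≤ F ℓ (insSh (σ⁻¹ 0) (shp σ α F) ℓ) := hpos ℓ _ (by omega)
    omega
  · -- (2)
    intro hα hBlr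
    by_contra h
    push_neg at h
    apply htB ℓ r (insSh (σ⁻¹ 0) (shp σ α F) r) hlr hα (by omega) (by omega)
    have h1 : F r (insSh (σ⁻¹ 0) (shp σ α F) r + 1) = 1 :=
      entry_one σ α F hF r _ (by omega) (by omega) (by omega)
    have h2 : 1 ≤ F ℓ (insSh (σ⁻¹ 0) (shp σ α F) r) := hpos ℓ _ (by omega)
    have h3 : F ℓ (insSh (σ⁻¹ 0) (shp σ α F) r) = 1 :=
      entry_one σ α F hF ℓ _ (by omega) (by omega) (by omega)
    have h4 : 2 ≤ F r (insSh (σ⁻¹ 0) (shp σ α F) r) :=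
      entry_ge2 σ α F hF r _ (by omega) (by omega)
    omega
  · -- (3)
    intro hα hBlr
    have hc1 := hchar.1 r
    have hBr : insSh (σ⁻¹ 0) (shp σ α F) r = α r := by
      by_contra h
      have hlt : insSh (σ⁻¹ 0) (shp σ α F) r < α r := by omega
      apply htA ℓ r (insSh (σ⁻¹ 0) (shp σ α F) r) hlr hα (by omega)
      have h1 : F ℓ (insSh (σ⁻¹ 0) (shp σ α F) r + 1) = 1 :=
        entry_one σ α F hF ℓ _ (by omega) (by omega) (by omega)
      have h2 : 1 ≤ F r (insSh (σ⁻¹ 0) (shp σ α F) r + 1) := hpos r _ (by omega)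
      have h3 : F r (insSh (σ⁻¹ 0) (shp σ α F) r + 1) = 1 :=
        entry_one σ α F hF r _ (by omega) (by omega) (by omega)
      have h4 : 1 ≤ F ℓ (insSh (σ⁻¹ 0) (shp σ α F) r) := hpos ℓ _ (by omega)
      omega
    refine ⟨hBr.symm, ?_⟩
    have hC : F ℓ 0 < F r 1 := chain_C σ α F hF hlr hα hBlr hBr 0 (by omega)
    have hd : F r 1 ≤ F r 0 := hdec r 0 (by omega)
    have hbℓ := hbase ℓ
    have hbr := hbase r
    omega
  · -- (4)
    intro hα hBrl
    have hc1 := hchar.1 ℓ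
    have hBl : insSh (σ⁻¹ 0) (shp σ α F) ℓ = α ℓ := by
      by_contra h
      have hlt : insSh (σ⁻¹ 0) (shp σ α F) ℓ < α ℓ := by omega
      apply htB ℓ r (insSh (σ⁻¹ 0) (shp σ α F) ℓ + 1) hlr hα (by omega) (by omega)
      have h1 : F ℓ (insSh (σ⁻¹ 0) (shp σ α F) ℓ + 1) = 1 :=
        entry_one σ α F hF ℓ _ (by omega) (by omega) (by omega)
      have h2 : F r (insSh (σ⁻¹ 0) (shp σ α F) ℓ + 1 + 1) = 1 :=
        entry_one σ α F hF r _ (by omega) (by omega) (by omega)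
      have h3 : 1 ≤ F r (insSh (σ⁻¹ 0) (shp σ α F) ℓ + 1) := hpos r _ (by omega)
      omega
    refine ⟨hBl.symm, ?_⟩
    have hE : F r 0 < F ℓ 0 := chain_E σ α F hF hlr hα hBrl hBl 0 (by omega)
    have hbℓ := hbase ℓ
    have hbr := hbase r
    omega

lemma chain_Cg {k : ℕ} (τ : Equiv.Perm (Fin k)) (b : Fin k → ℕ) (G : Fin k → ℕ → ℕ)
    (hG : G ∈ SSAFSet k b τ) {ℓ r : Fin k} (hlr : ℓ < r) (hb : b ℓ < b r)
    (h0 : G ℓ 0 ≤ G r 0) : ∀ j, j ≤ b ℓ → G ℓ j < G r (j + 1) := by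
  obtain ⟨⟨hpos, hbase, hdec, htA, htB⟩, hnorm⟩ := hG
  intro j
  induction j with
  | zero =>
    intro _
    have h3 := htB ℓ r 0 hlr hb (by omega) (by omega)
    omega
  | succ j ih =>
    intro hj
    have ihd := ih (by omega)
    have hdec2 : G ℓ (j + 1) ≤ G ℓ j := hdec ℓ j (by omega)
    have h3 := htB ℓ r (j + 1) hlr hb (by omega) (by omega)
    omega

lemma chain_Eg {k : ℕ} (τ : Equiv.Perm (Fin k)) (b : Fin k → ℕ) (G : Fin k → ℕ → ℕ)
    (hG : G ∈ SSAFSet k b τ) {ℓ r : Fin k} (hlr : ℓ < r) (hb : b r ≤ b ℓ)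
    (h0 : G r 0 < G ℓ 0) : ∀ j, j ≤ b r → G r j < G ℓ j := by
  obtain ⟨⟨hpos, hbase, hdec, htA, htB⟩, hnorm⟩ := hG
  intro j
  induction j with
  | zero => intro _; exact h0
  | succ j ih =>
    intro hj
    have ihd := ih (by omega)
    have hdec2 : G r (j + 1) ≤ G r j := hdec r j (by omega)
    have h3 := htA ℓ r j hlr hb (by omega)
    omega

lemma forward_mem (σ : Equiv.Perm (Fin (m + 1))) (α : Fin (m + 1) → ℕ)
    (F : Fin (m + 1) → ℕ → ℕ) (hF : F ∈ SSAFSet (m + 1) α σ) :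
    Phi σ F ∈ SSAFSet m (shp σ α F) (delPerm σ) := by
  have hchar := ssaf_char σ α F hF
  have hF2 := hF
  obtain ⟨⟨hpos, hbase, hdec, htA, htB⟩, hnorm⟩ := hF2
  have hext := forward_ext σ α F hF
  rw [covStep_iff] at hext
  have hq : ∀ i : Fin m, shp σ α F i = insSh (σ⁻¹ 0) (shp σ α F) ((σ⁻¹ 0).succAbove i) :=
    fun i => (insSh_succAbove _ _ i).symm
  -- an entry in the cells of the truncated diagram is ≥ 2 (including basement)
  have hge2 : ∀ (i : Fin m) (j : ℕ), j ≤ shp σ α F i → 2 ≤ F ((σ⁻¹ 0).succAbove i) j := by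
    intro i j hj
    match j with
    | 0 =>
      have := sigma_succAbove_pos σ i
      have := hbase ((σ⁻¹ 0).succAbove i)
      omega
    | j + 1 =>
      exact entry_ge2 σ α F hF _ _ (by omega) (by rw [← hq i]; omega)
  have hbnd : ∀ i : Fin m, shp σ α F i ≤ α ((σ⁻¹ 0).succAbove i) := by
    intro i; rw [hq i]; exact hchar.1 _
  refine ⟨⟨?_, ?_, ?_, ?_, ?_⟩, ?_⟩
  · intro i j hj
    have := hge2 i j hj
    simp only [Phi]; omega
  · intro i
    have h0 := hbase ((σ⁻¹ 0).succAbove i)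
    have h1 := sigma_succAbove_pos σ i
    have h2 := delPerm_val σ i
    simp only [Phi]; omega
  · intro i j hj
    have h1 := hdec ((σ⁻¹ 0).succAbove i) j (by have := hbnd i; omega)
    simp only [Phi]; omega
  · -- type A triples
    intro ℓ' r' i hlr hb hi
    rintro ⟨A1, A2⟩
    simp only [Phi] at A1 A2
    have hLR : (σ⁻¹ 0).succAbove ℓ' < (σ⁻¹ 0).succAbove r' :=
      Fin.succAbove_lt_succAbove_iff.mpr hlr
    have e1 : 2 ≤ F ((σ⁻¹ 0).succAbove ℓ') (i + 1) := hge2 ℓ' (i + 1) (by omega)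
    have e2 : 2 ≤ F ((σ⁻¹ 0).succAbove r') (i + 1) := hge2 r' (i + 1) (by omega)
    have e3 : 2 ≤ F ((σ⁻¹ 0).succAbove ℓ') i := hge2 ℓ' i (by omega)
    have A1' : F ((σ⁻¹ 0).succAbove ℓ') (i + 1) ≤ F ((σ⁻¹ 0).succAbove r') (i + 1) := by omega
    have A2' : F ((σ⁻¹ 0).succAbove r') (i + 1) ≤ F ((σ⁻¹ 0).succAbove ℓ') i := by omega
    by_cases hα : α ((σ⁻¹ 0).succAbove r') ≤ α ((σ⁻¹ 0).succAbove ℓ')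
    · exact htA _ _ i hLR hα (by have := hbnd r'; omega) ⟨A1', A2'⟩
    · push_neg at hα
      have h4 := ((hext.2 _ _ hLR).2.2.2 hα (by rw [← hq ℓ', ← hq r']; omega))
      have hE := chain_E σ α F hF hLR hα (by rw [← hq ℓ', ← hq r']; omega)
        h4.1.symm (i + 1) (by rw [← hq r']; omega)
      omega
  · -- type B triples
    intro ℓ' r' i hlr hb hi hi1
    rintro ⟨A1, A2⟩
    simp only [Phi] at A1 A2
    have hLR : (σ⁻¹ 0).succAbove ℓ' < (σ⁻¹ 0).succAbove r' :=
      Fin.succAbove_lt_succAbove_iff.mpr hlr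
    have e1 : 2 ≤ F ((σ⁻¹ 0).succAbove r') (i + 1) := hge2 r' (i + 1) (by omega)
    have e2 : 2 ≤ F ((σ⁻¹ 0).succAbove ℓ') i := hge2 ℓ' i (by omega)
    have e3 : 2 ≤ F ((σ⁻¹ 0).succAbove r') i := hge2 r' i (by omega)
    have A1' : F ((σ⁻¹ 0).succAbove r') (i + 1) ≤ F ((σ⁻¹ 0).succAbove ℓ') i := by omega
    have A2' : F ((σ⁻¹ 0).succAbove ℓ') i ≤ F ((σ⁻¹ 0).succAbove r') i := by omega
    by_cases hα : α ((σ⁻¹ 0).succAbove ℓ') < α ((σ⁻¹ 0).succAbove r')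
    · exact htB _ _ i hLR hα (by have := hbnd ℓ'; omega) (by have := hbnd r'; omega) ⟨A1', A2'⟩
    · push_neg at hα
      have h4 := ((hext.2 _ _ hLR).2.2.1 hα (by rw [← hq ℓ', ← hq r']; omega))
      have hC := chain_C σ α F hF hLR hα (by rw [← hq ℓ', ← hq r']; omega)
        h4.1.symm i (by rw [← hq ℓ']; omega)
      omega
  · -- normalization
    intro i j hj
    simp only [Phi]
    by_cases hja : α ((σ⁻¹ 0).succAbove i) < j
    · rw [hnorm _ _ hja]
    · push_neg at hja
      have h1 : F ((σ⁻¹ 0).succAbove i) j = 1 :=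
        entry_one σ α F hF _ j (by omega) hja (by rw [← hq i]; omega)
      omega

end OneStep

section Backward

variable {m : ℕ} (σ : Equiv.Perm (Fin (m + 1))) (α : Fin (m + 1) → ℕ)
  (b : Fin m → ℕ) (G : Fin m → ℕ → ℕ)

lemma insF_base (hG : G ∈ SSAFSet m b (delPerm σ)) :
    ∀ r, insF (σ⁻¹ 0) G r 0 = (σ r : ℕ) := by
  intro r
  rcases eq_or_ne r (σ⁻¹ 0) with rfl | hr
  · rw [insF_same]
    have := sigma_inv_zero σ
    simp [this]
  · obtain ⟨i, rfl⟩ := Fin.exists_succAbove_eq hr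
    rw [insF_succAbove]
    have h1 := hG.1.2.1 i
    have h2 := delPerm_val σ i
    have h3 := sigma_succAbove_pos σ i
    omega

lemma insF_pos (hG : G ∈ SSAFSet m b (delPerm σ)) :
    ∀ r j, 1 ≤ j → j ≤ insSh (σ⁻¹ 0) b r → 1 ≤ insF (σ⁻¹ 0) G r j := by
  intro r j h1 hj
  rcases eq_or_ne r (σ⁻¹ 0) with rfl | hr
  · rw [insSh_same] at hj; omega
  · obtain ⟨i, rfl⟩ := Fin.exists_succAbove_eq hr
    rw [insSh_succAbove] at hj
    rw [insF_succAbove]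
    exact hG.1.1 i j hj

lemma insF_zero (hG : G ∈ SSAFSet m b (delPerm σ)) :
    ∀ r j, insSh (σ⁻¹ 0) b r < j → insF (σ⁻¹ 0) G r j = 0 := by
  intro r j hj
  rcases eq_or_ne r (σ⁻¹ 0) with rfl | hr
  · exact insF_same_apply _ _ _
  · obtain ⟨i, rfl⟩ := Fin.exists_succAbove_eq hr
    rw [insSh_succAbove] at hj
    rw [insF_succAbove]
    exact hG.2 i j hj

lemma insF_dec (hG : G ∈ SSAFSet m b (delPerm σ)) :
    ∀ r j, j + 1 ≤ insSh (σ⁻¹ 0) b r → insF (σ⁻¹ 0) G r (j + 1) ≤ insF (σ⁻¹ 0) G r j := by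
  intro r j hj
  rcases eq_or_ne r (σ⁻¹ 0) with rfl | hr
  · rw [insSh_same] at hj; omega
  · obtain ⟨i, rfl⟩ := Fin.exists_succAbove_eq hr
    rw [insSh_succAbove] at hj
    rw [insF_succAbove]
    exact hG.1.2.2.1 i j hj

lemma psi_val (j : ℕ) (i : Fin (m + 1)) (hj : j ≤ α i) :
    Psi σ α G i j = insF (σ⁻¹ 0) G i j + 1 := if_pos hj

lemma backward_mem (hb : CovStep σ b α) (hG : G ∈ SSAFSet m b (delPerm σ)) :
    Psi σ α G ∈ SSAFSet (m + 1) α σ := by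
  rw [covStep_iff] at hb
  obtain ⟨hble, hcond⟩ := hb
  have hbase' := insF_base σ b G hG
  have hpos' := insF_pos σ b G hG
  have hzero' := insF_zero σ b G hG
  have hdec' := insF_dec σ b G hG
  have hGb := fun (x : Fin m) => (insSh_succAbove (σ⁻¹ 0) b x)
  refine ⟨⟨?_, ?_, ?_, ?_, ?_⟩, ?_⟩
  · intro i j hj
    rw [psi_val σ α G j i hj]; omega
  · intro i
    rw [psi_val σ α G 0 i (Nat.zero_le _), hbase' i]
  · intro i j hj
    rw [psi_val σ α G (j + 1) i hj, psi_val σ α G j i (by omega)]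
    by_cases h : j + 1 ≤ insSh (σ⁻¹ 0) b i
    · have := hdec' i j h; omega
    · have := hzero' i (j + 1) (by omega); omega
  · -- type A
    intro ℓ r i hlr hα hi1
    rintro ⟨A1, A2⟩
    rw [psi_val σ α G (i + 1) ℓ (by omega), psi_val σ α G (i + 1) r (by omega)] at A1
    rw [psi_val σ α G (i + 1) r (by omega), psi_val σ α G i ℓ (by omega)] at A2
    have A1' : insF (σ⁻¹ 0) G ℓ (i + 1) ≤ insF (σ⁻¹ 0) G r (i + 1) := by omega
    have A2' : insF (σ⁻¹ 0) G r (i + 1) ≤ insF (σ⁻¹ 0) G ℓ i := by omega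
    by_cases hβ : insSh (σ⁻¹ 0) b r ≤ insSh (σ⁻¹ 0) b ℓ
    · have hαβ : α r ≤ insSh (σ⁻¹ 0) b ℓ := (hcond ℓ r hlr).1 hα hβ
      by_cases hir : i + 1 ≤ insSh (σ⁻¹ 0) b r
      · -- all cells in the truncated diagram: use G's type A condition
        have hℓp : ℓ ≠ σ⁻¹ 0 := by
          intro h; rw [h, insSh_same] at hβ; omega
        have hrp : r ≠ σ⁻¹ 0 := by
          intro h; rw [h, insSh_same] at hir; omega
        obtain ⟨ℓ', rfl⟩ := Fin.exists_succAbove_eq hℓp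
        obtain ⟨r', rfl⟩ := Fin.exists_succAbove_eq hrp
        rw [insF_succAbove, insF_succAbove] at A1' A2'
        rw [insSh_succAbove, insSh_succAbove] at hβ
        rw [insSh_succAbove] at hir
        exact hG.1.2.2.2.1 ℓ' r' i (Fin.succAbove_lt_succAbove_iff.mp hlr) hβ hir ⟨A1', A2'⟩
      · -- row r has no cell there, but row ℓ does
        have h1 : 1 ≤ insF (σ⁻¹ 0) G ℓ (i + 1) := hpos' ℓ (i + 1) (by omega) (by omega)
        have h2 : insF (σ⁻¹ 0) G r (i + 1) = 0 := hzero' r (i + 1) (by omega)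
        omega
    · push_neg at hβ
      have h3 := (hcond ℓ r hlr).2.2.1 hα hβ
      by_cases hi' : i ≤ insSh (σ⁻¹ 0) b ℓ
      · rcases eq_or_ne ℓ (σ⁻¹ 0) with rfl | hℓp
        · -- row ℓ is the basement-1 row: its entries vanish in H
          rw [insSh_same] at hi'
          have hi0 : i = 0 := by omega
          subst hi0
          rw [insSh_same] at hβ
          norm_num at A1' A2' ⊢
          have h4 : insF (σ⁻¹ 0) G (σ⁻¹ 0) 0 = 0 := insF_same_apply _ _ _
          have h5 : 1 ≤ insF (σ⁻¹ 0) G r 1 := hpos' r 1 (by omega) (by omega)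
          have h6 : insF (σ.symm 0) G r 1 = insF (σ⁻¹ 0) G r 1 := rfl
          omega
        · have hrp : r ≠ σ⁻¹ 0 := by
            intro h; rw [h, insSh_same] at hβ; omega
          obtain ⟨ℓ', rfl⟩ := Fin.exists_succAbove_eq hℓp
          obtain ⟨r', rfl⟩ := Fin.exists_succAbove_eq hrp
          have hσ0 : G ℓ' 0 ≤ G r' 0 := by
            have e1 := insF_base σ b G hG ((σ⁻¹ 0).succAbove ℓ')
            have e2 := insF_base σ b G hG ((σ⁻¹ 0).succAbove r')
            rw [insF_succAbove] at e1 e2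
            have := h3.2
            omega
          have hCg := chain_Cg (delPerm σ) b G hG (Fin.succAbove_lt_succAbove_iff.mp hlr)
            (by rw [insSh_succAbove, insSh_succAbove] at hβ; exact hβ) hσ0 i
            (by rw [insSh_succAbove] at hi'; exact hi')
          rw [insF_succAbove, insF_succAbove] at A2'
          omega
      · push_neg at hi'
        have h4 : insF (σ⁻¹ 0) G ℓ i = 0 := hzero' ℓ i (by omega)
        have h5 : 1 ≤ insF (σ⁻¹ 0) G r (i + 1) := hpos' r (i + 1) (by omega) (by omega)
        omega
  · -- type B
    intro ℓ r i hlr hα hi hi1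
    rintro ⟨A1, A2⟩
    rw [psi_val σ α G (i + 1) r (by omega), psi_val σ α G i ℓ (by omega)] at A1
    rw [psi_val σ α G i ℓ (by omega), psi_val σ α G i r (by omega)] at A2
    have A1' : insF (σ⁻¹ 0) G r (i + 1) ≤ insF (σ⁻¹ 0) G ℓ i := by omega
    have A2' : insF (σ⁻¹ 0) G ℓ i ≤ insF (σ⁻¹ 0) G r i := by omega
    by_cases hβ : insSh (σ⁻¹ 0) b ℓ < insSh (σ⁻¹ 0) b r
    · by_cases hi' : i ≤ insSh (σ⁻¹ 0) b ℓ
      · rcases eq_or_ne ℓ (σ⁻¹ 0) with rfl | hℓp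
        · rw [insSh_same] at hi'
          have hi0 : i = 0 := by omega
          subst hi0
          rw [insSh_same] at hβ
          norm_num at A1' A2' ⊢
          have h4 : insF (σ⁻¹ 0) G (σ⁻¹ 0) 0 = 0 := insF_same_apply _ _ _
          have h5 : 1 ≤ insF (σ⁻¹ 0) G r 1 := hpos' r 1 (by omega) (by omega)
          have h6 : insF (σ.symm 0) G r 1 = insF (σ⁻¹ 0) G r 1 := rfl
          omega
        · have hrp : r ≠ σ⁻¹ 0 := by
            intro h; rw [h, insSh_same] at hβ; omega
          obtain ⟨ℓ', rfl⟩ := Fin.exists_succAbove_eq hℓp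
          obtain ⟨r', rfl⟩ := Fin.exists_succAbove_eq hrp
          rw [insF_succAbove, insF_succAbove] at A1' A2'
          rw [insSh_succAbove] at hi'
          rw [insSh_succAbove, insSh_succAbove] at hβ
          exact hG.1.2.2.2.2 ℓ' r' i (Fin.succAbove_lt_succAbove_iff.mp hlr) hβ hi'
            (by omega) ⟨A1', A2'⟩
      · push_neg at hi'
        have h2 := (hcond ℓ r hlr).2.1 hα hβ
        have h4 : insF (σ⁻¹ 0) G ℓ i = 0 := hzero' ℓ i (by omega)
        have h5 : 1 ≤ insF (σ⁻¹ 0) G r (i + 1) := hpos' r (i + 1) (by omega) (by omega)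
        omega
    · push_neg at hβ
      have h4 := (hcond ℓ r hlr).2.2.2 hα hβ
      have hℓp : ℓ ≠ σ⁻¹ 0 := by
        intro h
        have : (σ ℓ : ℕ) = 0 := by rw [h]; simp [sigma_inv_zero σ]
        omega
      obtain ⟨ℓ', rfl⟩ := Fin.exists_succAbove_eq hℓp
      rcases eq_or_ne r (σ⁻¹ 0) with rfl | hrp
      · -- row r vanishes in H
        have h5 : insF (σ⁻¹ 0) G (σ⁻¹ 0) i = 0 := insF_same_apply _ _ _
        have h5' : insF (σ⁻¹ 0) G (σ⁻¹ 0) (i + 1) = 0 := insF_same_apply _ _ _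
        rcases Nat.eq_zero_or_pos i with rfl | hipos
        · have e1 := insF_base σ b G hG ((σ⁻¹ 0).succAbove ℓ')
          have e2 : (σ (σ⁻¹ 0) : ℕ) = 0 := by simp [sigma_inv_zero σ]
          have := h4.2
          rw [e2] at this
          omega
        · have h6 : 1 ≤ insF (σ⁻¹ 0) G ((σ⁻¹ 0).succAbove ℓ') i := by
            refine hpos' _ i (by omega) ?_
            rw [insSh_succAbove]
            rw [insSh_succAbove] at h4
            omega
          omega
      · obtain ⟨r', rfl⟩ := Fin.exists_succAbove_eq hrp
        have hσ0 : G r' 0 < G ℓ' 0 := by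
          have e1 := insF_base σ b G hG ((σ⁻¹ 0).succAbove ℓ')
          have e2 := insF_base σ b G hG ((σ⁻¹ 0).succAbove r')
          rw [insF_succAbove] at e1 e2
          have := h4.2
          omega
        rw [insSh_succAbove, insSh_succAbove] at hβ
        rw [insF_succAbove, insF_succAbove] at A1' A2'
        by_cases hir : i ≤ b r'
        · have hEg := chain_Eg (delPerm σ) b G hG (Fin.succAbove_lt_succAbove_iff.mp hlr)
            hβ hσ0 i hir
          omega
        · push_neg at hir
          have h5 : G r' i = 0 := hG.2 r' i hir
          rcases Nat.eq_zero_or_pos i with rfl | hipos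
          · omega
          · have h6 : 1 ≤ G ℓ' i := by
              refine hG.1.1 ℓ' i ?_
              rw [insSh_succAbove] at h4
              omega
            omega
  · intro i j hj
    simp only [Psi]
    rw [if_neg (by omega)]

lemma backward_shp (hb : CovStep σ b α) (hG : G ∈ SSAFSet m b (delPerm σ)) :
    shp σ α (Psi σ α G) = b := by
  rw [covStep_iff] at hb
  funext i
  have hble : b i ≤ α ((σ⁻¹ 0).succAbove i) := by
    have := hb.1 ((σ⁻¹ 0).succAbove i)
    rwa [insSh_succAbove] at this
  have : (Finset.Icc 1 (α ((σ⁻¹ 0).succAbove i))).filter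
      (fun j => 2 ≤ Psi σ α G ((σ⁻¹ 0).succAbove i) j) = Finset.Icc 1 (b i) := by
    ext j
    simp only [Finset.mem_filter, Finset.mem_Icc]
    constructor
    · rintro ⟨⟨h1, h2⟩, h3⟩
      rw [psi_val σ α G j _ h2, insF_succAbove] at h3
      refine ⟨h1, ?_⟩
      by_contra h
      have := hG.2 i j (by omega)
      omega
    · rintro ⟨h1, h2⟩
      have h2' : j ≤ α ((σ⁻¹ 0).succAbove i) := le_trans h2 hble
      refine ⟨⟨h1, h2'⟩, ?_⟩
      rw [psi_val σ α G j _ h2', insF_succAbove]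
      have := hG.1.1 i j h2
      omega
  rw [shp, this, Nat.card_Icc]
  omega

lemma backward_phi (hb : CovStep σ b α) (hG : G ∈ SSAFSet m b (delPerm σ)) :
    Phi σ (Psi σ α G) = G := by
  rw [covStep_iff] at hb
  funext i j
  simp only [Phi, Psi]
  by_cases hj : j ≤ α ((σ⁻¹ 0).succAbove i)
  · rw [if_pos hj, insF_succAbove]; omega
  · rw [if_neg hj]
    have hble : b i ≤ α ((σ⁻¹ 0).succAbove i) := by
      have := hb.1 ((σ⁻¹ 0).succAbove i)
      rwa [insSh_succAbove] at this
    have := hG.2 i j (by omega)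
    omega

lemma forward_inv (F : Fin (m + 1) → ℕ → ℕ) (hF : F ∈ SSAFSet (m + 1) α σ) :
    Psi σ α (Phi σ F) = F := by
  funext i j
  simp only [Psi]
  by_cases hj : j ≤ α i
  · rw [if_pos hj]
    rcases eq_or_ne i (σ⁻¹ 0) with rfl | hip
    · rw [insF_same_apply]
      have h1 : F (σ⁻¹ 0) j = 1 := by
        rcases Nat.eq_zero_or_pos j with rfl | hjpos
        · have := hF.1.2.1 (σ⁻¹ 0)
          rw [this]
          simp [sigma_inv_zero σ]
        · exact entry_one σ α F hF _ j hjpos hj (by rw [insSh_same]; omega)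
      omega
    · obtain ⟨i', rfl⟩ := Fin.exists_succAbove_eq hip
      rw [insF_succAbove]
      simp only [Phi]
      have := hF.1.1 _ j hj
      omega
  · rw [if_neg hj]
    exact (hF.2 i j (by omega)).symm

end Backward

section Weight

variable {m : ℕ}

lemma weight_split (σ : Equiv.Perm (Fin (m + 1))) (α : Fin (m + 1) → ℕ)
    (F : Fin (m + 1) → ℕ → ℕ) (hF : F ∈ SSAFSet (m + 1) α σ) (x : ℕ → ℝ) :
    (∏ i : Fin (m + 1), ∏ j ∈ Finset.Icc 1 (α i), x (F i j)) =
      x 1 ^ ((∑ i, α i) - ∑ i : Fin m, shp σ α F i) *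
        ∏ i : Fin m, ∏ j ∈ Finset.Icc 1 (shp σ α F i), x (Phi σ F i j + 1) := by
  have hchar := ssaf_char σ α F hF
  have row_split : ∀ r : Fin (m + 1),
      (∏ j ∈ Finset.Icc 1 (α r), x (F r j)) =
        x 1 ^ (α r - insSh (σ⁻¹ 0) (shp σ α F) r) *
          ∏ j ∈ Finset.Icc 1 (insSh (σ⁻¹ 0) (shp σ α F) r), x (F r j) := by
    intro r
    have hle := hchar.1 r
    have hsplit := Finset.prod_Ioc_consecutive (fun j => x (F r j))
      (Nat.zero_le (insSh (σ⁻¹ 0) (shp σ α F) r)) hle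
    rw [show Finset.Icc 1 (α r) = Finset.Ioc 0 (α r) from Finset.Icc_add_one_left_eq_Ioc 0 (α r),
      show Finset.Icc 1 (insSh (σ⁻¹ 0) (shp σ α F) r) =
        Finset.Ioc 0 (insSh (σ⁻¹ 0) (shp σ α F) r) from Finset.Icc_add_one_left_eq_Ioc 0 _, ← hsplit]
    have hconst : (∏ j ∈ Finset.Ioc (insSh (σ⁻¹ 0) (shp σ α F) r) (α r), x (F r j)) =
        x 1 ^ (α r - insSh (σ⁻¹ 0) (shp σ α F) r) := by
      rw [← Nat.card_Ioc]
      rw [← Finset.prod_const]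
      apply Finset.prod_congr rfl
      intro j hj
      rw [Finset.mem_Ioc] at hj
      rw [entry_one σ α F hF r j (by omega) hj.2 hj.1]
    rw [hconst, mul_comm]
  calc (∏ i : Fin (m + 1), ∏ j ∈ Finset.Icc 1 (α i), x (F i j))
      = ∏ r : Fin (m + 1), (x 1 ^ (α r - insSh (σ⁻¹ 0) (shp σ α F) r) *
          ∏ j ∈ Finset.Icc 1 (insSh (σ⁻¹ 0) (shp σ α F) r), x (F r j)) :=
        Finset.prod_congr rfl (fun r _ => row_split r)
    _ = (∏ r : Fin (m + 1), x 1 ^ (α r - insSh (σ⁻¹ 0) (shp σ α F) r)) *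
          ∏ r : Fin (m + 1), ∏ j ∈ Finset.Icc 1 (insSh (σ⁻¹ 0) (shp σ α F) r), x (F r j) :=
        Finset.prod_mul_distrib
    _ = x 1 ^ ((∑ i, α i) - ∑ i : Fin m, shp σ α F i) *
          ∏ i : Fin m, ∏ j ∈ Finset.Icc 1 (shp σ α F i), x (Phi σ F i j + 1) := by
        congr 1
        · rw [Finset.prod_pow_eq_pow_sum]
          congr 1
          have hsum : ∑ r : Fin (m + 1), insSh (σ⁻¹ 0) (shp σ α F) r
              = ∑ i : Fin m, shp σ α F i := by
            rw [Fin.sum_univ_succAbove (fun r => insSh (σ⁻¹ 0) (shp σ α F) r) (σ⁻¹ 0)]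
            simp only [insSh_same, insSh_succAbove, zero_add]
          have hsum2 : ∑ r : Fin (m + 1), (α r - insSh (σ⁻¹ 0) (shp σ α F) r)
              = (∑ r, α r) - ∑ r : Fin (m + 1), insSh (σ⁻¹ 0) (shp σ α F) r := by
            have h1 : (∑ r : Fin (m + 1), (α r - insSh (σ⁻¹ 0) (shp σ α F) r))
                + ∑ r : Fin (m + 1), insSh (σ⁻¹ 0) (shp σ α F) r = ∑ r, α r := by
              rw [← Finset.sum_add_distrib]
              apply Finset.sum_congr rfl
              intro r _
              have := hchar.1 r
              omega
            omega
          rw [hsum2, hsum]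
        · rw [Fin.prod_univ_succAbove
            (fun r => ∏ j ∈ Finset.Icc 1 (insSh (σ⁻¹ 0) (shp σ α F) r), x (F r j)) (σ⁻¹ 0)]
          simp only [insSh_same, insSh_succAbove]
          rw [show Finset.Icc 1 0 = (∅ : Finset ℕ) by simp]
          rw [Finset.prod_empty, one_mul]
          apply Finset.prod_congr rfl
          intro i _
          apply Finset.prod_congr rfl
          intro j hj
          rw [Finset.mem_Icc] at hj
          have h2 : 2 ≤ F ((σ⁻¹ 0).succAbove i) j := by
            apply entry_ge2 σ α F hF _ j hj.1
            rw [insSh_succAbove]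
            exact hj.2
          simp only [Phi]
          congr 1
          omega

end Weight

section Finiteness

lemma ssaf_finite (n : ℕ) (α : Fin n → ℕ) (σ : Equiv.Perm (Fin n)) :
    (SSAFSet n α σ).Finite := by
  apply finite_bounded_fillings (A := Finset.univ.sup α) (B := n)
  intro F hF i j
  constructor
  · by_cases hj : j ≤ α i
    · have h1 : F i j ≤ F i 0 := dec_trans α F hF.1.2.2.1 i 0 j (Nat.zero_le _) hj
      have h2 := hF.1.2.1 i
      have h3 := (σ i).isLt
      omega
    · rw [hF.2 i j (by omega)]; omega
  · intro hj
    apply hF.2 i j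
    have : α i ≤ Finset.univ.sup α := Finset.le_sup (Finset.mem_univ i)
    omega

lemma cov_finite {m : ℕ} (σ : Equiv.Perm (Fin (m + 1))) (α : Fin (m + 1) → ℕ) :
    {b : Fin m → ℕ | CovStep σ b α}.Finite := by
  apply finite_bounded_comps (A := Finset.univ.sup α)
  intro b hb i
  rw [Set.mem_setOf_eq, covStep_iff] at hb
  have h1 := hb.1 ((σ⁻¹ 0).succAbove i)
  rw [insSh_succAbove] at h1
  have : α ((σ⁻¹ 0).succAbove i) ≤ Finset.univ.sup α := Finset.le_sup (Finset.mem_univ _)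
  omega

end Finiteness

lemma step_lemma {m : ℕ} (σ : Equiv.Perm (Fin (m + 1))) (α : Fin (m + 1) → ℕ) (x : ℕ → ℝ) :
    atomSum (m + 1) α σ x =
      ∑ᶠ b ∈ {b : Fin m → ℕ | CovStep σ b α},
        x 1 ^ ((∑ i, α i) - ∑ i, b i) * atomSum m b (delPerm σ) (fun k => x (k + 1)) := by
  rw [atomSum, finsum_mem_eq_finite_toFinset_sum _ (ssaf_finite (m + 1) α σ),
    finsum_mem_eq_finite_toFinset_sum _ (cov_finite σ α)]
  have inner : ∀ b : Fin m → ℕ, atomSum m b (delPerm σ) (fun k => x (k + 1)) =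
      ∑ G ∈ (ssaf_finite m b (delPerm σ)).toFinset,
        ∏ i : Fin m, ∏ j ∈ Finset.Icc 1 (b i), x (G i j + 1) :=
    fun b => finsum_mem_eq_finite_toFinset_sum _ _
  calc (∑ F ∈ (ssaf_finite (m + 1) α σ).toFinset,
        ∏ i : Fin (m + 1), ∏ j ∈ Finset.Icc 1 (α i), x (F i j))
      = ∑ q ∈ (cov_finite σ α).toFinset.sigma
            (fun b => (ssaf_finite m b (delPerm σ)).toFinset),
          x 1 ^ ((∑ i, α i) - ∑ i, q.1 i) *
            ∏ i : Fin m, ∏ j ∈ Finset.Icc 1 (q.1 i), x (q.2 i j + 1) := by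
        apply Finset.sum_nbij'
          (i := fun F => (⟨shp σ α F, Phi σ F⟩ : Σ _ : Fin m → ℕ, Fin m → ℕ → ℕ))
          (j := fun q => Psi σ α q.2)
        · intro F hF
          rw [Set.Finite.mem_toFinset] at hF
          rw [Finset.mem_sigma, Set.Finite.mem_toFinset, Set.Finite.mem_toFinset]
          exact ⟨forward_ext σ α F hF, forward_mem σ α F hF⟩
        · intro q hq
          rw [Finset.mem_sigma, Set.Finite.mem_toFinset, Set.Finite.mem_toFinset] at hq
          rw [Set.Finite.mem_toFinset]
          exact backward_mem σ α q.1 q.2 hq.1 hq.2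
        · intro F hF
          rw [Set.Finite.mem_toFinset] at hF
          exact forward_inv σ α F hF
        · intro q hq
          rw [Finset.mem_sigma, Set.Finite.mem_toFinset, Set.Finite.mem_toFinset] at hq
          have h1 := backward_shp σ α q.1 q.2 hq.1 hq.2
          have h2 := backward_phi σ α q.1 q.2 hq.1 hq.2
          exact Sigma.ext h1 (by rw [h1, h2])
        · intro F hF
          rw [Set.Finite.mem_toFinset] at hF
          exact weight_split σ α F hF x
    _ = ∑ b ∈ (cov_finite σ α).toFinset,
          x 1 ^ ((∑ i, α i) - ∑ i, b i) * atomSum m b (delPerm σ) (fun k => x (k + 1)) := by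
        rw [Finset.sum_sigma]
        apply Finset.sum_congr rfl
        intro b _
        rw [inner b, Finset.mul_sum]

section ChainSide

lemma delPerm'_congr {a b : ℕ} (h : a = b) (τ : Equiv.Perm (Fin a)) :
    delPerm' ((finCongr h).permCongr τ) =
      (finCongr (by rw [h] : a - 1 = b - 1)).permCongr (delPerm' τ) := by
  subst h; rw [permCongr_self, permCongr_self]

lemma sigmaAt_cast {n : ℕ} (σ : Equiv.Perm (Fin n)) {j j' : ℕ} (h : j = j') :
    sigmaAt σ j = (finCongr (by rw [h] : n - j' = n - j)).permCongr (sigmaAt σ j') := by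
  subst h; rw [permCongr_self]

lemma sigmaAt_succ {m : ℕ} (σ : Equiv.Perm (Fin (m + 1))) (k : ℕ) :
    sigmaAt σ (k + 1) =
      (finCongr (by omega : m - k = m + 1 - (k + 1))).permCongr (sigmaAt (delPerm σ) k) := by
  induction k with
  | zero =>
    show delPerm' (sigmaAt σ 0) = _
    show delPerm σ = _
    rw [show sigmaAt (delPerm σ) 0 = delPerm σ from rfl]
    exact (permCongr_self _ _).symm
  | succ k ih =>
    show delPerm' (sigmaAt σ (k + 1)) = _
    rw [ih, delPerm'_congr]
    show (finCongr _).permCongr (sigmaAt (delPerm σ) (k + 1)) = _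
    exact permCongr_irrel _ _ _

lemma covTau_eq {m : ℕ} (σ : Equiv.Perm (Fin (m + 1))) (ℓ : ℕ) (hℓ : ℓ + 1 ≤ m)
    (h1 : m + 1 - (m + 1 - (ℓ + 1)) = ℓ + 1) (h2 : m - (m - (ℓ + 1)) = ℓ + 1) :
    (finCongr h1).permCongr (sigmaAt σ (m + 1 - (ℓ + 1))) =
      (finCongr h2).permCongr (sigmaAt (delPerm σ) (m - (ℓ + 1))) := by
  rw [sigmaAt_cast σ (show m + 1 - (ℓ + 1) = (m - (ℓ + 1)) + 1 by omega),
    sigmaAt_succ σ (m - (ℓ + 1)), permCongr_permCongr, permCongr_permCongr]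

lemma covTau_top {m : ℕ} (σ : Equiv.Perm (Fin (m + 1)))
    (h1 : m + 1 - (m + 1 - (m + 1)) = m + 1) :
    (finCongr h1).permCongr (sigmaAt σ (m + 1 - (m + 1))) = σ := by
  rw [sigmaAt_cast σ (show m + 1 - (m + 1) = 0 by omega), permCongr_permCongr]
  rw [show sigmaAt σ 0 = σ from rfl]
  exact permCongr_self _ σ

lemma chain_finite (n : ℕ) (σ : Equiv.Perm (Fin n)) (α : Fin n → ℕ) :
    (ChainSet n σ α).Finite := by
  apply finite_bounded_chains (n := n) (A := Finset.univ.sup α)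
  intro c hc
  obtain ⟨h1, h2, h3⟩ := hc
  refine ⟨?_, h2⟩
  have key : ∀ d, ∀ i : Fin (n - d), c (n - d) i ≤ Finset.univ.sup α := by
    intro d
    induction d with
    | zero =>
      intro i
      have := h1 i
      calc c (n - 0) i = α i := h1 i
      _ ≤ Finset.univ.sup α := Finset.le_sup (Finset.mem_univ _)
    | succ d ih =>
      intro i
      by_cases hd : d + 1 ≤ n
      · have e : n - d = n - (d + 1) + 1 := by omega
        rw [e] at ih
        have h4 := h3 (n - (d + 1)) (by omega)
        rw [covStep_iff] at h4
        have h5 := h4.1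
        have h6 := h5 ((((finCongr (Nat.sub_sub_self (by omega : n - (d+1) + 1 ≤ n))).permCongr
          (sigmaAt σ (n - (n - (d + 1) + 1))))⁻¹ 0).succAbove i)
        rw [insSh_succAbove] at h6
        exact le_trans h6 (ih _)
      · have := i.isLt
        omega
  intro ℓ i
  by_cases hn : ℓ ≤ n
  · have hk := key (n - ℓ)
    rw [show n - (n - ℓ) = ℓ from by omega] at hk
    exact hk i
  · rw [h2 ℓ (by omega) i]
    exact Nat.zero_le _

/-- truncate a chain to length `m`. -/
def truncChain (m : ℕ) (c : (ℓ : ℕ) → Fin ℓ → ℕ) : (ℓ : ℕ) → Fin ℓ → ℕ :=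
  fun ℓ => if ℓ ≤ m then c ℓ else fun _ => 0

/-- extend a chain by a top composition `α`. -/
def extChain {m : ℕ} (α : Fin (m + 1) → ℕ) (c : (ℓ : ℕ) → Fin ℓ → ℕ) : (ℓ : ℕ) → Fin ℓ → ℕ :=
  fun ℓ => if h : ℓ ≤ m then c ℓ
    else if h2 : ℓ = m + 1 then fun i => α (Fin.cast h2 i) else fun _ => 0

end ChainSide

section ChainStep

variable {m : ℕ}

noncomputable def chainWt (n : ℕ) (x : ℕ → ℝ) (c : (ℓ : ℕ) → Fin ℓ → ℕ) : ℝ :=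
  ∏ i ∈ Finset.range n, x (i + 1) ^ ((∑ j, c (n - i) j) - ∑ j, c (n - i - 1) j)

lemma trunc_mem (σ : Equiv.Perm (Fin (m + 1))) (α : Fin (m + 1) → ℕ)
    (c : (ℓ : ℕ) → Fin ℓ → ℕ) (hc : c ∈ ChainSet (m + 1) σ α) :
    CovStep σ (c m) α ∧ truncChain m c ∈ ChainSet m (delPerm σ) (c m) := by
  obtain ⟨h1, h2, h3⟩ := hc
  have hca : c (m + 1) = α := funext h1
  have htop := h3 m (le_refl (m + 1))
  rw [covTau_top σ, hca] at htop
  refine ⟨htop, ?_, ?_, ?_⟩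
  · intro i
    simp only [truncChain, if_pos (le_refl m)]
  · intro ℓ hℓ i
    simp only [truncChain, if_neg (by omega : ¬ ℓ ≤ m)]
  · intro ℓ hℓ
    have e1 : truncChain m c ℓ = c ℓ := if_pos (by omega)
    have e2 : truncChain m c (ℓ + 1) = c (ℓ + 1) := if_pos hℓ
    rw [e1, e2, ← covTau_eq σ ℓ hℓ (Nat.sub_sub_self (by omega)) (Nat.sub_sub_self hℓ)]
    exact h3 ℓ (by omega)

lemma extChain_top (α : Fin (m + 1) → ℕ) (c : (ℓ : ℕ) → Fin ℓ → ℕ) :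
    ∀ i : Fin (m + 1), extChain α c (m + 1) i = α i := by
  intro i
  simp only [extChain, dif_neg (by omega : ¬ m + 1 ≤ m), dif_pos rfl]
  congr

lemma ext_mem (σ : Equiv.Perm (Fin (m + 1))) (α : Fin (m + 1) → ℕ) (b : Fin m → ℕ)
    (c' : (ℓ : ℕ) → Fin ℓ → ℕ) (hb : CovStep σ b α)
    (hc : c' ∈ ChainSet m (delPerm σ) b) :
    extChain α c' ∈ ChainSet (m + 1) σ α := by
  obtain ⟨h1, h2, h3⟩ := hc
  refine ⟨extChain_top α c', ?_, ?_⟩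
  · intro ℓ hℓ i
    simp only [extChain, dif_neg (by omega : ¬ ℓ ≤ m), dif_neg (by omega : ¬ ℓ = m + 1)]
  · intro ℓ hℓ
    by_cases hℓm : ℓ + 1 ≤ m
    · have e1 : extChain α c' ℓ = c' ℓ := dif_pos (by omega)
      have e2 : extChain α c' (ℓ + 1) = c' (ℓ + 1) := dif_pos hℓm
      rw [e1, e2, covTau_eq σ ℓ hℓm (Nat.sub_sub_self hℓ) (Nat.sub_sub_self hℓm)]
      exact h3 ℓ hℓm
    · have hm : ℓ = m := by omega
      subst hm
      have e1 : extChain α c' ℓ = c' ℓ := dif_pos (le_refl ℓ)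
      have e2 : c' ℓ = b := funext h1
      have e3 : extChain α c' (ℓ + 1) = α := funext (extChain_top α c')
      rw [covTau_top σ, e1, e2, e3]
      exact hb

lemma ext_trunc (σ : Equiv.Perm (Fin (m + 1))) (α : Fin (m + 1) → ℕ)
    (c : (ℓ : ℕ) → Fin ℓ → ℕ) (hc : c ∈ ChainSet (m + 1) σ α) :
    extChain α (truncChain m c) = c := by
  funext ℓ
  by_cases hℓ : ℓ ≤ m
  · simp only [extChain, dif_pos hℓ, truncChain, if_pos hℓ]
  · by_cases hℓ2 : ℓ = m + 1
    · subst hℓ2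
      funext i
      rw [extChain_top α _ i, hc.1 i]
    · simp only [extChain, dif_neg hℓ, dif_neg hℓ2]
      exact (funext (hc.2.1 ℓ (by omega))).symm

lemma trunc_ext (σ : Equiv.Perm (Fin (m + 1))) (α : Fin (m + 1) → ℕ) (b : Fin m → ℕ)
    (c' : (ℓ : ℕ) → Fin ℓ → ℕ) (hc : c' ∈ ChainSet m (delPerm σ) b) :
    truncChain m (extChain α c') = c' ∧ extChain α c' m = b := by
  constructor
  · funext ℓ
    by_cases hℓ : ℓ ≤ m
    · simp only [truncChain, if_pos hℓ, extChain, dif_pos hℓ]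
    · simp only [truncChain, if_neg hℓ]
      exact (funext (hc.2.1 ℓ (by omega))).symm
  · have e1 : extChain α c' m = c' m := dif_pos (le_refl m)
    rw [e1]
    exact funext hc.1

lemma trunc_wt (σ : Equiv.Perm (Fin (m + 1))) (α : Fin (m + 1) → ℕ)
    (c : (ℓ : ℕ) → Fin ℓ → ℕ) (hc : c ∈ ChainSet (m + 1) σ α) (x : ℕ → ℝ) :
    chainWt (m + 1) x c =
      x 1 ^ ((∑ i, α i) - ∑ i, c m i) * chainWt m (fun k => x (k + 1)) (truncChain m c) := by
  rw [chainWt, Finset.prod_range_succ', mul_comm]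
  congr 1
  · have e1 : ∑ j : Fin (m + 1 - 0), c (m + 1 - 0) j = ∑ i, α i := by
      apply Finset.sum_congr rfl
      intro j _
      exact hc.1 j
    have e2 : (m + 1 - 0 - 1) = m := by omega
    rw [e2, e1]
  · rw [chainWt]
    apply Finset.prod_congr rfl
    intro i hi
    rw [Finset.mem_range] at hi
    have e1 : m + 1 - (i + 1) = m - i := by omega
    have e2 : truncChain m c (m - i) = c (m - i) := if_pos (by omega)
    have e3 : truncChain m c (m - i - 1) = c (m - i - 1) := if_pos (by omega)
    rw [e2, e3, e1]

lemma chainstep (σ : Equiv.Perm (Fin (m + 1))) (α : Fin (m + 1) → ℕ) (x : ℕ → ℝ) :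
    (∑ᶠ c ∈ ChainSet (m + 1) σ α, chainWt (m + 1) x c) =
      ∑ᶠ b ∈ {b : Fin m → ℕ | CovStep σ b α},
        x 1 ^ ((∑ i, α i) - ∑ i, b i) *
          ∑ᶠ c ∈ ChainSet m (delPerm σ) b, chainWt m (fun k => x (k + 1)) c := by
  rw [finsum_mem_eq_finite_toFinset_sum _ (chain_finite (m + 1) σ α),
    finsum_mem_eq_finite_toFinset_sum _ (cov_finite σ α)]
  have inner : ∀ b : Fin m → ℕ,
      (∑ᶠ c ∈ ChainSet m (delPerm σ) b, chainWt m (fun k => x (k + 1)) c) =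
      ∑ c ∈ (chain_finite m (delPerm σ) b).toFinset, chainWt m (fun k => x (k + 1)) c :=
    fun b => finsum_mem_eq_finite_toFinset_sum _ _
  calc (∑ c ∈ (chain_finite (m + 1) σ α).toFinset, chainWt (m + 1) x c)
      = ∑ q ∈ (cov_finite σ α).toFinset.sigma
            (fun b => (chain_finite m (delPerm σ) b).toFinset),
          x 1 ^ ((∑ i, α i) - ∑ i, q.1 i) * chainWt m (fun k => x (k + 1)) q.2 := by
        apply Finset.sum_nbij'
          (i := fun c => (⟨c m, truncChain m c⟩ : Σ _ : Fin m → ℕ, (ℓ : ℕ) → Fin ℓ → ℕ))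
          (j := fun q => extChain α q.2)
        · intro c hcm
          rw [Set.Finite.mem_toFinset] at hcm
          rw [Finset.mem_sigma, Set.Finite.mem_toFinset, Set.Finite.mem_toFinset]
          exact ⟨(trunc_mem σ α c hcm).1, (trunc_mem σ α c hcm).2⟩
        · intro q hq
          rw [Finset.mem_sigma, Set.Finite.mem_toFinset, Set.Finite.mem_toFinset] at hq
          rw [Set.Finite.mem_toFinset]
          exact ext_mem σ α q.1 q.2 hq.1 hq.2
        · intro c hcm
          rw [Set.Finite.mem_toFinset] at hcm
          exact ext_trunc σ α c hcm
        · intro q hq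
          rw [Finset.mem_sigma, Set.Finite.mem_toFinset, Set.Finite.mem_toFinset] at hq
          obtain ⟨ht, he⟩ := trunc_ext σ α q.1 q.2 hq.2
          exact Sigma.ext he (by rw [he, ht])
        · intro c hcm
          rw [Set.Finite.mem_toFinset] at hcm
          exact trunc_wt σ α c hcm x
    _ = ∑ b ∈ (cov_finite σ α).toFinset,
          x 1 ^ ((∑ i, α i) - ∑ i, b i) *
            ∑ᶠ c ∈ ChainSet m (delPerm σ) b, chainWt m (fun k => x (k + 1)) c := by
        rw [Finset.sum_sigma]
        apply Finset.sum_congr rfl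
        intro b _
        rw [inner b, Finset.mul_sum]

end ChainStep

lemma ssaf_zero (α : Fin 0 → ℕ) (σ : Equiv.Perm (Fin 0)) :
    SSAFSet 0 α σ = {fun i _ => 0} := by
  apply Set.eq_singleton_iff_unique_mem.mpr
  constructor
  · exact ⟨⟨fun i => i.elim0, fun i => i.elim0, fun i => i.elim0,
      fun ℓ => ℓ.elim0, fun ℓ => ℓ.elim0⟩, fun i => i.elim0⟩
  · intro F _
    funext i
    exact i.elim0

lemma chain_zero (σ : Equiv.Perm (Fin 0)) (α : Fin 0 → ℕ) :
    ChainSet 0 σ α = {fun _ _ => 0} := by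
  apply Set.eq_singleton_iff_unique_mem.mpr
  constructor
  · exact ⟨fun i => i.elim0, fun ℓ _ i => rfl, fun ℓ hℓ => absurd hℓ (by omega)⟩
  · intro c hc
    funext ℓ i
    rcases Nat.eq_zero_or_pos ℓ with rfl | hℓ
    · exact i.elim0
    · exact hc.2.1 ℓ hℓ i

lemma main_theorem : ∀ (n : ℕ) (σ : Equiv.Perm (Fin n)) (α : Fin n → ℕ) (x : ℕ → ℝ),
    atomSum n α σ x =
      ∑ᶠ c ∈ ChainSet n σ α,
        ∏ i ∈ Finset.range n,
          x (i + 1) ^ ((∑ j, c (n - i) j) - ∑ j, c (n - i - 1) j) := by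
  intro n
  induction n with
  | zero =>
    intro σ α x
    rw [atomSum, ssaf_zero α σ, chain_zero σ α]
    rw [finsum_mem_singleton, finsum_mem_singleton]
    simp
  | succ m ih =>
    intro σ α x
    have hgoal : (∑ᶠ c ∈ ChainSet (m + 1) σ α,
        ∏ i ∈ Finset.range (m + 1),
          x (i + 1) ^ ((∑ j, c (m + 1 - i) j) - ∑ j, c (m + 1 - i - 1) j)) =
        ∑ᶠ c ∈ ChainSet (m + 1) σ α, chainWt (m + 1) x c := rfl
    rw [hgoal, chainstep σ α x, step_lemma σ α x]
    apply finsum_mem_congr rfl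
    intro b hb
    congr 1
    exact ih (delPerm σ) b (fun k => x (k + 1))

theorem stmt14 (n : ℕ) (σ : Equiv.Perm (Fin n)) (α : Fin n → ℕ) (x : ℕ → ℝ) :
    atomSum n α σ x =
      ∑ᶠ c ∈ ChainSet n σ α,
        ∏ i ∈ Finset.range n,
          x (i + 1) ^ ((∑ j, c (n - i) j) - ∑ j, c (n - i - 1) j) :=
  main_theorem n σ α x
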